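/- Let u : ℝ^N → ℝ be continuously differentiable, and suppose x_k → z and λ_k → Λ are sequences with x_{k,1} > λ_k, z₁ = Λ, and u(x_k) ≥ u(x_k^{λ_k}) for all k, where x^λ = (2λ − x₁, x'). Then ∂u/∂x₁(z) ≥ 0. -/

import Mathlib

open Filter

theorem partial_x1_nonneg_at_limit_of_reflection_comparison {N : ℕ} [NeZero N]
    (u : EuclideanSpace ℝ (Fin N) → ℝ) (hu : ContDiff ℝ 1 u)
    (x : ℕ → EuclideanSpace ℝ (Fin N)) (lam : ℕ → ℝ)
    (z : EuclideanSpace ℝ (Fin N)) (Λ : ℝ)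
    (hx : Tendsto x atTop (nhds z)) (hlam : Tendsto lam atTop (nhds Λ))
    (hgt : ∀ k, x k 0 > lam k) (hz : z 0 = Λ)
    (hcomp : ∀ k, u (x k) ≥ u (WithLp.toLp 2 (Function.update (x k) 0 (2 * lam k - x k 0)))) :
    0 ≤ fderiv ℝ u z (EuclideanSpace.single 0 1) := by
  set e₁ : EuclideanSpace ℝ (Fin N) := EuclideanSpace.single 0 1 with he₁
  set f := fderiv ℝ u z with hf
  set t : ℕ → ℝ := fun k => 2 * (x k 0 - lam k) with htdef
  set y : ℕ → EuclideanSpace ℝ (Fin N) := fun k => x k - t k • e₁ with hydef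
  have htpos : ∀ k, 0 < t k := fun k => by
    have := hgt k; simp only [htdef]; linarith
  have hupdate : ∀ k, WithLp.toLp 2 (Function.update (x k) 0 (2 * lam k - x k 0)) = y k := by
    intro k
    ext j
    by_cases hj : j = 0
    · subst hj
      simp [hydef, htdef, he₁, Function.update_self, EuclideanSpace.single_apply]
      ring
    · simp [hydef, he₁, Function.update_of_ne hj, EuclideanSpace.single_apply, hj]
  have hx0 : Tendsto (fun k => x k 0) atTop (nhds (z 0)) :=
    ((EuclideanSpace.proj (0 : Fin N)).continuous.tendsto z).comp hx
  have ht0 : Tendsto t atTop (nhds 0) := by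
    have : Tendsto t atTop (nhds (2 * (z 0 - Λ))) := ((hx0.sub hlam).const_mul 2)
    simpa [hz] using this
  have hy : Tendsto y atTop (nhds z) := by
    have : Tendsto y atTop (nhds (z - (0 : ℝ) • e₁)) := hx.sub (ht0.smul_const e₁)
    simpa using this
  have hne₁ : ‖e₁‖ = 1 := by simp [he₁]
  have hstrict : HasStrictFDerivAt u f z :=
    (hu.contDiffAt).hasStrictFDerivAt one_ne_zero
  have key : ∀ ε : ℝ, 0 < ε → -ε ≤ f e₁ := by
    intro ε hε
    have hlittle := hstrict.isLittleO.def hε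
    have hpair : Tendsto (fun k => (x k, y k)) atTop (nhds (z, z)) :=
      hx.prodMk_nhds hy
    have hev : ∀ᶠ k in atTop,
        ‖u (x k) - u (y k) - f (x k - y k)‖ ≤ ε * ‖x k - y k‖ :=
      hpair.eventually hlittle
    obtain ⟨k, hk⟩ := hev.exists
    have hdiff : x k - y k = t k • e₁ := by
      simp [hydef]
    have hcomp' : u (x k) - u (y k) ≥ 0 := by
      have := hcomp k
      rw [hupdate k] at this
      linarith
    rw [hdiff] at hk
    have hnorm : ‖t k • e₁‖ = t k := by
      rw [norm_smul, hne₁, Real.norm_eq_abs, abs_of_pos (htpos k), mul_one]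
    have hfsmul : f (t k • e₁) = t k * f e₁ := by
      rw [map_smul]; simp
    rw [hnorm, hfsmul] at hk
    have habs : |u (x k) - u (y k) - t k * f e₁| ≤ ε * t k := by
      simpa [Real.norm_eq_abs] using hk
    have h1 : u (x k) - u (y k) - t k * f e₁ ≤ ε * t k := (abs_le.mp habs).2
    have h2 : t k * f e₁ ≥ -(ε * t k) := by linarith
    have := htpos k
    nlinarith [htpos k]
  by_contra h
  push_neg at h
  have := key (-(f e₁) / 2) (by linarith)
  linarith
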